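/- Let μ, ν be Schwartz functions on ℝⁿ and M ≥ −1 an integer such that all derivatives D^τ μ̂(0) = 0 for |τ| ≤ M. Then for any N > 0 there is a constant C_N such that sup_{z ∈ ℝⁿ} |(μ_t * ν)(z)| (1+|z|)^N ≤ C_N t^{M+1} for all 0 < t ≤ 2, where μ_t(x) = t^{-n} μ(x/t). -/

import Mathlib

open MeasureTheory SchwartzMap Real FourierTransform Filter Set
open scoped RealInnerProductSpace
set_option maxHeartbeats 2000000
set_option synthInstance.maxHeartbeats 1000000



-- Helper 1: iteratedDerivWithin on Icc 0 1 equals iteratedDeriv for smooth functions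
lemma aux_itdw_eq (g : ℝ → ℂ) (hg : ContDiff ℝ (⊤ : ℕ∞) g) (k : ℕ) {x : ℝ}
    (hx : x ∈ Set.Icc (0:ℝ) 1) :
    iteratedDerivWithin k g (Set.Icc 0 1) x = iteratedDeriv k g x := by
  rw [iteratedDerivWithin, iteratedDeriv]
  congr 1
  have h := (contDiff_iff_ftaylorSeries.mp hg).hasFTaylorSeriesUpToOn (Set.Icc (0:ℝ) 1)
  exact (h.eq_iteratedFDerivWithin_of_uniqueDiffOn (mod_cast le_top)
    (uniqueDiffOn_Icc one_pos) hx).symm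

-- Helper 2: iterated derivative along a line
lemma aux_line_deriv {E' : Type*} [NormedAddCommGroup E'] [NormedSpace ℝ E']
    (f : E' → ℂ) (hf : ContDiff ℝ (⊤ : ℕ∞) f) (z w : E') (k : ℕ) :
    iteratedDeriv k (fun s : ℝ => f (z + s • w)) =
      fun s => iteratedFDeriv ℝ k f (z + s • w) (fun _ => w) := by
  induction k with
  | zero => ext s; simp
  | succ k ih =>
    ext s
    rw [iteratedDeriv_succ, ih]
    have h1 : HasDerivAt (fun s : ℝ => z + s • w) w s := by
      simpa using ((hasDerivAt_id s).smul_const w).const_add z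
    have hdiff : Differentiable ℝ (iteratedFDeriv ℝ k f) :=
      hf.differentiable_iteratedFDeriv (by exact_mod_cast lt_top_iff_ne_top.2 (by simp))
    have h2 : HasDerivAt (fun s : ℝ => iteratedFDeriv ℝ k f (z + s • w))
        (fderiv ℝ (iteratedFDeriv ℝ k f) (z + s • w) w) s :=
      (hdiff _).hasFDerivAt.comp_hasDerivAt s h1
    have h3 := (ContinuousMultilinearMap.apply ℝ (fun _ : Fin k => E') ℂ
      (fun _ => w)).hasFDerivAt.comp_hasDerivAt s h2
    have h4 : deriv (fun s : ℝ => iteratedFDeriv ℝ k f (z + s • w) (fun _ => w)) s =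
        (fderiv ℝ (iteratedFDeriv ℝ k f) (z + s • w) w) (fun _ => w) := h3.deriv
    rw [h4, iteratedFDeriv_succ_apply_left]
    rfl



lemma aux_moment (n : ℕ) (μ : SchwartzMap (EuclideanSpace ℝ (Fin n)) ℂ) (k : ℕ)
    (h : iteratedFDeriv ℝ k (⇑(SchwartzMap.fourierTransformCLM ℂ μ)) 0 = 0)
    (L : ContinuousMultilinearMap ℝ (fun _ : Fin k => EuclideanSpace ℝ (Fin n)) ℂ) :
    ∫ x : EuclideanSpace ℝ (Fin n), μ x * L (fun _ => x) = 0 := by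
  set E := EuclideanSpace ℝ (Fin n)
  have hμint : ∀ j : ℕ, (j : ℕ∞) ≤ (k : ℕ∞) → Integrable (fun v : E => ‖v‖ ^ j * ‖μ v‖) :=
    fun j _ => μ.integrable_pow_mul volume j
  have h1 : iteratedFDeriv ℝ k (𝓕 ⇑μ) =
      𝓕 (fun v => VectorFourier.fourierPowSMulRight (innerSL ℝ) ⇑μ v k) :=
    Real.iteratedFDeriv_fourier (N := (k : ℕ∞)) hμint
      μ.continuous.aestronglyMeasurable le_rfl
  have h0 : (𝓕 (fun v => VectorFourier.fourierPowSMulRight (innerSL ℝ) ⇑μ v k)) 0 = 0 := by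
    rw [← h1]; exact h
  have hGint : Integrable (fun v : E => VectorFourier.fourierPowSMulRight (innerSL ℝ) ⇑μ v k) := by
    refine ((hμint k le_rfl).const_mul ((2 * π * ‖(innerSL ℝ : E →L[ℝ] E →L[ℝ] ℝ)‖) ^ k)).mono'
      (μ.continuous.fourierPowSMulRight _ _).aestronglyMeasurable ?_
    filter_upwards with v
    calc ‖VectorFourier.fourierPowSMulRight (innerSL ℝ) (⇑μ) v k‖
        ≤ (2 * π * ‖(innerSL ℝ : E →L[ℝ] E →L[ℝ] ℝ)‖) ^ k * ‖v‖ ^ k * ‖μ v‖ :=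
          VectorFourier.norm_fourierPowSMulRight_le _ _ _ _
      _ = (2 * π * ‖(innerSL ℝ : E →L[ℝ] E →L[ℝ] ℝ)‖) ^ k * (‖v‖ ^ k * ‖μ v‖) := by ring
  have h2 : (∫ v : E, VectorFourier.fourierPowSMulRight (innerSL ℝ) ⇑μ v k) = 0 := by
    rw [Real.fourier_eq] at h0
    simpa using h0
  have h4 : ∀ m : Fin k → E, (∫ v : E, (∏ i, ⟪v, m i⟫) • μ v) = 0 := by
    intro m
    have h3 : (∫ v : E, VectorFourier.fourierPowSMulRight (innerSL ℝ) ⇑μ v k m) = 0 := by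
      rw [← ContinuousMultilinearMap.integral_apply hGint m, h2]
      simp
    simp only [VectorFourier.fourierPowSMulRight_apply, innerSL_apply_apply] at h3
    rw [integral_smul] at h3
    rcases smul_eq_zero.1 h3 with hc | hint
    · exact absurd hc (by
        apply pow_ne_zero
        simp [Complex.ext_iff, Real.pi_ne_zero])
    · exact hint
  classical
  set b := EuclideanSpace.basisFun (Fin n) ℝ with hb
  have hL : ∀ x : E, L (fun _ => x) =
      ∑ r : Fin k → Fin n, (∏ i, ⟪b (r i), x⟫) • L (fun i => b (r i)) := by
    intro x
    conv_lhs => rw [show (fun _ : Fin k => x) = (fun _ : Fin k => ∑ j, ⟪b j, x⟫ • b j) from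
      funext fun _ => (b.sum_repr' x).symm]
    have e1 : (L (fun _ => ∑ j, ⟪b j, x⟫ • b j)) =
        ∑ r : Fin k → Fin n, L (fun i => ⟪b (r i), x⟫ • b (r i)) :=
      L.toMultilinearMap.map_sum _
    rw [e1]
    exact Finset.sum_congr rfl fun r _ => L.map_smul_univ _ _
  have hbnorm : ∀ j, ‖b j‖ = 1 := fun j => b.orthonormal.1 j
  have hprodle : ∀ (r : Fin k → Fin n) (x : E), |∏ i, ⟪b (r i), x⟫| ≤ ‖x‖ ^ k := by
    intro r x
    rw [Finset.abs_prod]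
    calc ∏ i, |⟪b (r i), x⟫| ≤ ∏ _i : Fin k, ‖x‖ := by
          apply Finset.prod_le_prod (fun i _ => abs_nonneg _)
          intro i _
          have := abs_real_inner_le_norm (b (r i)) x
          rwa [hbnorm, one_mul] at this
      _ = ‖x‖ ^ k := by simp
  have hint : ∀ r : Fin k → Fin n,
      Integrable (fun x : E => μ x * ((∏ i, ⟪b (r i), x⟫) • L (fun i => b (r i)))) := by
    intro r
    refine ((μ.integrable_pow_mul volume k).const_mul (‖L (fun i => b (r i))‖)).mono' ?_ ?_
    · apply Continuous.aestronglyMeasurable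
      apply μ.continuous.mul
      apply Continuous.fun_smul ?_ continuous_const
      exact continuous_finset_prod _ fun i _ => (innerSL ℝ (b (r i))).continuous
    · filter_upwards with x
      rw [norm_mul, norm_smul, Real.norm_eq_abs]
      calc ‖μ x‖ * (|∏ i, ⟪b (r i), x⟫| * ‖L (fun i => b (r i))‖)
          ≤ ‖μ x‖ * (‖x‖ ^ k * ‖L (fun i => b (r i))‖) := by
            apply mul_le_mul_of_nonneg_left ?_ (norm_nonneg _)
            exact mul_le_mul_of_nonneg_right (hprodle r x) (norm_nonneg _)
        _ = ‖L (fun i => b (r i))‖ * (‖x‖ ^ k * ‖μ x‖) := by ring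
  calc (∫ x : E, μ x * L (fun _ => x))
      = ∫ x : E, ∑ r : Fin k → Fin n, μ x * ((∏ i, ⟪b (r i), x⟫) • L (fun i => b (r i))) := by
        congr 1; funext x; rw [hL x, Finset.mul_sum]
    _ = ∑ r : Fin k → Fin n, ∫ x : E, μ x * ((∏ i, ⟪b (r i), x⟫) • L (fun i => b (r i))) :=
        integral_finset_sum _ (fun r _ => hint r)
    _ = 0 := by
        apply Finset.sum_eq_zero
        intro r _
        have e2 : ∀ x : E, μ x * ((∏ i, ⟪b (r i), x⟫) • L (fun i => b (r i))) =
            ((∏ i, ⟪x, b (r i)⟫) • μ x) * L (fun i => b (r i)) := by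
          intro x
          rw [smul_mul_assoc, mul_smul_comm]
          congr 1
          exact Finset.prod_congr rfl fun i _ => real_inner_comm x (b (r i))
        simp_rw [e2]
        rw [integral_mul_const, h4 (fun i => b (r i)), zero_mul]

lemma aux_taylor (n : ℕ) (ν : SchwartzMap (EuclideanSpace ℝ (Fin n)) ℂ) (m K : ℕ) (N : ℝ)
    (hNK : N ≤ (K : ℝ)) (hN0 : 0 < N) :
    ∃ A : ℝ, 0 ≤ A ∧ ∀ (z y : EuclideanSpace ℝ (Fin n)),
      ‖ν (z - y) - ∑ k ∈ Finset.range m, ((k.factorial : ℝ)⁻¹ •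
          iteratedFDeriv ℝ k (⇑ν) z (fun _ => -y))‖ * (1 + ‖z‖) ^ N ≤
        A * (‖y‖ ^ m * (1 + ‖y‖) ^ K) := by
  set E := EuclideanSpace ℝ (Fin n)
  set A₀ : ℝ := 2 ^ K * ((Finset.Iic (K, m)).sup
    (fun p => SchwartzMap.seminorm ℝ p.1 p.2) ν) with hA₀def
  have hA₀nonneg : 0 ≤ A₀ := by positivity
  have hA₀ : ∀ j, j ≤ m → ∀ x : E, (1 + ‖x‖) ^ K * ‖iteratedFDeriv ℝ j (⇑ν) x‖ ≤ A₀ :=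
    fun j hj x => SchwartzMap.one_add_le_sup_seminorm_apply (𝕜 := ℝ) (m := (K, m))
      le_rfl hj ν x
  -- peak inequality
  have hzpos : ∀ z : E, (0:ℝ) < (1 + ‖z‖) ^ N :=
    fun z => Real.rpow_pos_of_pos (by positivity) N
  have claim : ∀ (j : ℕ), j ≤ m → ∀ (u z y : E), ‖z‖ ≤ ‖u‖ + ‖y‖ →
      ‖iteratedFDeriv ℝ j (⇑ν) u‖ * (1 + ‖z‖) ^ N ≤ A₀ * (1 + ‖y‖) ^ K := by
    intro j hj u z y hzuy
    have h1 : (1 + ‖z‖) ^ N ≤ (1 + ‖z‖) ^ (K : ℕ) := by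
      rw [← Real.rpow_natCast (1 + ‖z‖) K]
      exact Real.rpow_le_rpow_of_exponent_le (by linarith [norm_nonneg z]) hNK
    have h2 : (1 + ‖z‖) ^ (K:ℕ) ≤ ((1 + ‖u‖) * (1 + ‖y‖)) ^ (K:ℕ) := by
      apply pow_le_pow_left₀ (by positivity)
      nlinarith [norm_nonneg u, norm_nonneg y]
    calc ‖iteratedFDeriv ℝ j (⇑ν) u‖ * (1 + ‖z‖) ^ N
        ≤ ‖iteratedFDeriv ℝ j (⇑ν) u‖ * ((1 + ‖u‖) * (1 + ‖y‖)) ^ (K:ℕ) := by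
          exact mul_le_mul_of_nonneg_left (h1.trans h2) (norm_nonneg _)
      _ = ((1 + ‖u‖) ^ (K:ℕ) * ‖iteratedFDeriv ℝ j (⇑ν) u‖) * (1 + ‖y‖) ^ (K:ℕ) := by
          rw [mul_pow]; ring
      _ ≤ A₀ * (1 + ‖y‖) ^ (K:ℕ) := by
          exact mul_le_mul_of_nonneg_right (hA₀ j hj u) (by positivity)
  refine ⟨A₀, hA₀nonneg, fun z y => ?_⟩
  match m, hA₀, claim with
  | 0, hA₀, claim =>
    simp only [Finset.range_zero, Finset.sum_empty, sub_zero, pow_zero, one_mul]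
    have := claim 0 le_rfl (z - y) z y (by
      calc ‖z‖ = ‖(z - y) + y‖ := by rw [sub_add_cancel]
        _ ≤ ‖z - y‖ + ‖y‖ := norm_add_le _ _)
    rwa [norm_iteratedFDeriv_zero] at this
  | (p+1), hA₀, claim =>
    set m' := p + 1 with hm'
    set w : E := -y with hw
    set g : ℝ → ℂ := fun s => ν (z + s • w) with hgdef
    have haff : ContDiff ℝ (⊤:ℕ∞) (fun s : ℝ => z + s • w) :=
      contDiff_const.add (contDiff_id.smul contDiff_const)
    have hg : ContDiff ℝ (⊤:ℕ∞) g := (ν.smooth ⊤).comp haff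
    have hgd : ∀ k, iteratedDeriv k g =
        fun s => iteratedFDeriv ℝ k (⇑ν) (z + s • w) (fun _ => w) :=
      fun k => aux_line_deriv (⇑ν) (ν.smooth ⊤) z w k
    have hwn : ‖w‖ = ‖y‖ := norm_neg y
    have hC : ∀ s ∈ Icc (0:ℝ) 1, ‖iteratedDerivWithin m' g (Icc 0 1) s‖ ≤
        A₀ * (‖y‖ ^ m' * (1 + ‖y‖) ^ K) / (1 + ‖z‖) ^ N := by
      intro s hs
      rw [aux_itdw_eq g hg _ hs, hgd]
      have hb1 : ‖iteratedFDeriv ℝ m' (⇑ν) (z + s • w) (fun _ => w)‖ ≤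
          ‖iteratedFDeriv ℝ m' (⇑ν) (z + s • w)‖ * ‖y‖ ^ m' := by
        calc ‖iteratedFDeriv ℝ m' (⇑ν) (z + s • w) (fun _ => w)‖
            ≤ ‖iteratedFDeriv ℝ m' (⇑ν) (z + s • w)‖ * ∏ _i : Fin m', ‖w‖ :=
              ContinuousMultilinearMap.le_opNorm _ _
          _ = ‖iteratedFDeriv ℝ m' (⇑ν) (z + s • w)‖ * ‖y‖ ^ m' := by
              rw [Finset.prod_const, hwn]; simp
      have hzb : ‖z‖ ≤ ‖z + s • w‖ + ‖y‖ := by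
        have : z = (z + s • w) + s • y := by
          rw [hw]; module
        calc ‖z‖ = ‖(z + s • w) + s • y‖ := by rw [← this]
          _ ≤ ‖z + s • w‖ + ‖s • y‖ := norm_add_le _ _
          _ ≤ ‖z + s • w‖ + ‖y‖ := by
              gcongr
              rw [norm_smul, Real.norm_eq_abs, abs_of_nonneg hs.1]
              exact mul_le_of_le_one_left (norm_nonneg _) hs.2
      have hb2 := claim m' le_rfl (z + s • w) z y hzb
      rw [le_div_iff₀ (hzpos z)]
      calc ‖iteratedFDeriv ℝ m' (⇑ν) (z + s • w) (fun _ => w)‖ * (1 + ‖z‖) ^ N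
          ≤ (‖iteratedFDeriv ℝ m' (⇑ν) (z + s • w)‖ * ‖y‖ ^ m') * (1 + ‖z‖) ^ N :=
            mul_le_mul_of_nonneg_right hb1 (hzpos z).le
        _ = (‖iteratedFDeriv ℝ m' (⇑ν) (z + s • w)‖ * (1 + ‖z‖) ^ N) * ‖y‖ ^ m' := by ring
        _ ≤ (A₀ * (1 + ‖y‖) ^ K) * ‖y‖ ^ m' :=
            mul_le_mul_of_nonneg_right hb2 (by positivity)
        _ = A₀ * (‖y‖ ^ m' * (1 + ‖y‖) ^ K) := by ring
    have htay := taylor_mean_remainder_bound (f := g) (a := 0) (b := 1) (n := p)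
      zero_le_one ((hg.of_le (mod_cast le_top)).contDiffOn) (right_mem_Icc.2 zero_le_one) hC
    have hg1 : g 1 = ν (z - y) := by
      simp only [hgdef, one_smul, hw, sub_eq_add_neg]
    have htaylorsum : taylorWithinEval g p (Icc 0 1) 0 1 =
        ∑ k ∈ Finset.range m', ((k.factorial : ℝ)⁻¹ •
          iteratedFDeriv ℝ k (⇑ν) z (fun _ => -y)) := by
      rw [taylor_within_apply]
      apply Finset.sum_congr rfl
      intro k _
      rw [aux_itdw_eq g hg k (left_mem_Icc.2 zero_le_one), hgd]
      simp only [sub_zero, one_pow, mul_one, zero_smul, add_zero, hw]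
    rw [hg1, htaylorsum] at htay
    rw [← le_div_iff₀ (hzpos z)]
    calc ‖ν (z - y) - ∑ k ∈ Finset.range m', ((k.factorial : ℝ)⁻¹ •
          iteratedFDeriv ℝ k (⇑ν) z (fun _ => -y))‖
        ≤ A₀ * (‖y‖ ^ m' * (1 + ‖y‖) ^ K) / (1 + ‖z‖) ^ N * (1 - 0) ^ (p + 1) / p.factorial :=
          htay
      _ ≤ A₀ * (‖y‖ ^ m' * (1 + ‖y‖) ^ K) / (1 + ‖z‖) ^ N := by
          rw [sub_zero, one_pow, mul_one]
          apply div_le_self (by positivity)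
          exact_mod_cast Nat.one_le_iff_ne_zero.2 p.factorial_ne_zero

theorem stmt_18 (n : ℕ) (μ ν : SchwartzMap (EuclideanSpace ℝ (Fin n)) ℂ)
    (M : ℤ) (hM : -1 ≤ M)
    (hmom : ∀ m : ℕ, (m : ℤ) ≤ M →
        iteratedFDeriv ℝ m (⇑(SchwartzMap.fourierTransformCLM ℂ μ)) 0 = 0) :
    ∀ N : ℝ, 0 < N → ∃ C : ℝ, ∀ t : ℝ, 0 < t → t ≤ 2 →
      ∀ z : EuclideanSpace ℝ (Fin n),
        ‖∫ y : EuclideanSpace ℝ (Fin n),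
            (t ^ (-(n : ℝ)) : ℝ) • μ (t⁻¹ • y) * ν (z - y)‖ * (1 + ‖z‖) ^ N
          ≤ C * t ^ ((M : ℝ) + 1) := by
  intro N hN0
  set E := EuclideanSpace ℝ (Fin n) with hE
  set m : ℕ := (M + 1).toNat with hmdef
  have hm : ((m : ℤ)) = M + 1 := Int.toNat_of_nonneg (by linarith)
  have hmomk : ∀ k : ℕ, k < m →
      iteratedFDeriv ℝ k (⇑(SchwartzMap.fourierTransformCLM ℂ μ)) 0 = 0 := by
    intro k hk
    apply hmom
    have : (k : ℤ) < (m : ℤ) := by exact_mod_cast hk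
    omega
  set K : ℕ := ⌈N⌉₊ with hKdef
  have hNK : N ≤ (K : ℝ) := Nat.le_ceil N
  obtain ⟨A, hA0, hA⟩ := aux_taylor n ν m K N hNK hN0
  -- polynomial growth helper
  have hpoly : ∀ a : ℝ, 0 ≤ a → (1 + 2*a) ^ K ≤ 3 ^ K * (1 + a ^ K) := by
    intro a ha
    rcases le_total a 1 with h1 | h1
    · calc (1 + 2*a) ^ K ≤ 3 ^ K := by
            apply pow_le_pow_left₀ (by linarith) (by linarith)
        _ ≤ 3 ^ K * (1 + a ^ K) := by
            nth_rewrite 1 [← mul_one (3 ^ K : ℝ)]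
            exact mul_le_mul_of_nonneg_left (le_add_of_nonneg_right (by positivity)) (by positivity)
    · calc (1 + 2*a) ^ K ≤ (3 * a) ^ K := by
            apply pow_le_pow_left₀ (by linarith) (by linarith)
        _ = 3 ^ K * a ^ K := mul_pow 3 a K
        _ ≤ 3 ^ K * (1 + a ^ K) := by
            apply mul_le_mul_of_nonneg_left (by linarith [pow_nonneg ha K]) (by positivity)
  have hBint : Integrable (fun x : E => ‖μ x‖ * (‖x‖ ^ m * (1 + 2*‖x‖) ^ K)) := by
    refine (((μ.integrable_pow_mul volume m).add
      (μ.integrable_pow_mul volume (m + K))).const_mul (3 ^ K)).mono' ?_ ?_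
    · exact (μ.continuous.norm.mul ((continuous_norm.pow m).mul
        ((continuous_const.add (continuous_const.mul continuous_norm)).pow K))).aestronglyMeasurable
    · filter_upwards with x
      rw [Real.norm_eq_abs, abs_of_nonneg (by positivity)]
      calc ‖μ x‖ * (‖x‖ ^ m * (1 + 2*‖x‖) ^ K)
          ≤ ‖μ x‖ * (‖x‖ ^ m * (3 ^ K * (1 + ‖x‖ ^ K))) := by
            apply mul_le_mul_of_nonneg_left ?_ (norm_nonneg _)
            exact mul_le_mul_of_nonneg_left (hpoly _ (norm_nonneg _)) (by positivity)
        _ = 3 ^ K * (‖x‖ ^ m * ‖μ x‖ + ‖x‖ ^ (m + K) * ‖μ x‖) := by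
            rw [pow_add]; ring
  set B : ℝ := ∫ x : E, ‖μ x‖ * (‖x‖ ^ m * (1 + 2*‖x‖) ^ K) with hBdef
  refine ⟨A * B, ?_⟩
  intro t ht ht2 z
  set c : ℝ := (t ^ (-(n : ℝ)) : ℝ) with hcdef
  have hc : c = (t ^ n)⁻¹ := by
    rw [hcdef, Real.rpow_neg ht.le, Real.rpow_natCast]
  have hcpos : 0 < c := by rw [hc]; positivity
  have htn : (0:ℝ) < t ^ n := by positivity
  -- integrability of scaled Schwartz function with polynomial weights
  have hμcomp : ∀ j : ℕ, Integrable (fun y : E => ‖y‖ ^ j * ‖μ (t⁻¹ • y)‖) := by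
    intro j
    have h1 : Integrable (fun x : E => t ^ j * (‖x‖ ^ j * ‖μ x‖)) :=
      (μ.integrable_pow_mul volume j).const_mul _
    have h2 := h1.comp_smul (μ := volume) (R := t⁻¹) (inv_ne_zero ht.ne')
    have key : ∀ y : E, t ^ j * (‖t⁻¹ • y‖ ^ j * ‖μ (t⁻¹ • y)‖) = ‖y‖ ^ j * ‖μ (t⁻¹ • y)‖ := by
      intro y
      rw [norm_smul, Real.norm_eq_abs, abs_of_nonneg (inv_nonneg.2 ht.le), mul_pow,
        ← mul_assoc, ← mul_assoc, ← mul_pow, mul_inv_cancel₀ ht.ne', one_pow, one_mul]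
    exact h2.congr (Eventually.of_forall key)
  -- the Taylor polynomial term
  set T : E → E → ℂ := fun z y => ∑ k ∈ Finset.range m, ((k.factorial : ℝ)⁻¹ •
      iteratedFDeriv ℝ k (⇑ν) z (fun _ => -y)) with hTdef
  have hνbdd : ∃ Dν : ℝ, 0 ≤ Dν ∧ ∀ x : E, ‖ν x‖ ≤ Dν := by
    refine ⟨(SchwartzMap.seminorm ℝ 0 0) ν, apply_nonneg _ _, fun x => ?_⟩
    exact ν.norm_le_seminorm ℝ x
  obtain ⟨Dν, hDν0, hDν⟩ := hνbdd
  have hint1 : Integrable (fun y : E => c • μ (t⁻¹ • y) * ν (z - y)) := by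
    refine ((hμcomp 0).const_mul (c * Dν)).mono' ?_ ?_
    · exact ((continuous_const.fun_smul (μ.continuous.comp (continuous_const_smul t⁻¹))).mul
        (ν.continuous.comp (continuous_const.sub continuous_id))).aestronglyMeasurable
    · filter_upwards with y
      rw [norm_mul, norm_smul, Real.norm_eq_abs, abs_of_nonneg hcpos.le]
      calc c * ‖μ (t⁻¹ • y)‖ * ‖ν (z - y)‖ ≤ c * ‖μ (t⁻¹ • y)‖ * Dν := by
            apply mul_le_mul_of_nonneg_left (hDν _) (by positivity)
        _ = c * Dν * (‖y‖ ^ 0 * ‖μ (t⁻¹ • y)‖) := by ring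
  have hintk : ∀ k : ℕ, Integrable (fun y : E => c • μ (t⁻¹ • y) *
      ((k.factorial : ℝ)⁻¹ • iteratedFDeriv ℝ k (⇑ν) z (fun _ => -y))) := by
    intro k
    refine ((hμcomp k).const_mul
      (c * ((k.factorial : ℝ)⁻¹ * ‖iteratedFDeriv ℝ k (⇑ν) z‖))).mono' ?_ ?_
    · apply Continuous.aestronglyMeasurable
      apply (continuous_const.fun_smul (μ.continuous.comp (continuous_const_smul t⁻¹))).mul
      apply Continuous.fun_const_smul
      exact (iteratedFDeriv ℝ k (⇑ν) z).cont.comp (continuous_pi fun _ => continuous_neg)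
    · filter_upwards with y
      rw [norm_mul, norm_smul, norm_smul, Real.norm_eq_abs, abs_of_nonneg hcpos.le,
        Real.norm_eq_abs, abs_of_nonneg (by positivity)]
      have hL : ‖iteratedFDeriv ℝ k (⇑ν) z (fun _ => -y)‖ ≤
          ‖iteratedFDeriv ℝ k (⇑ν) z‖ * ‖y‖ ^ k := by
        calc ‖iteratedFDeriv ℝ k (⇑ν) z (fun _ => -y)‖
            ≤ ‖iteratedFDeriv ℝ k (⇑ν) z‖ * ∏ _i : Fin k, ‖(-y : E)‖ :=
              ContinuousMultilinearMap.le_opNorm _ _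
          _ = ‖iteratedFDeriv ℝ k (⇑ν) z‖ * ‖y‖ ^ k := by
              rw [Finset.prod_const, norm_neg]; simp
      calc c * ‖μ (t⁻¹ • y)‖ * ((k.factorial : ℝ)⁻¹ * ‖iteratedFDeriv ℝ k (⇑ν) z (fun _ => -y)‖)
          ≤ c * ‖μ (t⁻¹ • y)‖ * ((k.factorial : ℝ)⁻¹ * (‖iteratedFDeriv ℝ k (⇑ν) z‖ * ‖y‖ ^ k)) := by
            apply mul_le_mul_of_nonneg_left ?_ (by positivity)
            exact mul_le_mul_of_nonneg_left hL (by positivity)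
        _ = c * ((k.factorial : ℝ)⁻¹ * ‖iteratedFDeriv ℝ k (⇑ν) z‖) * (‖y‖ ^ k * ‖μ (t⁻¹ • y)‖) := by
            ring
  have hintT : Integrable (fun y : E => c • μ (t⁻¹ • y) * T z y) := by
    have : (fun y : E => c • μ (t⁻¹ • y) * T z y) = fun y : E => ∑ k ∈ Finset.range m,
        c • μ (t⁻¹ • y) * ((k.factorial : ℝ)⁻¹ • iteratedFDeriv ℝ k (⇑ν) z (fun _ => -y)) := by
      funext y; rw [hTdef]; exact Finset.mul_sum _ _ _
    rw [this]
    exact integrable_finset_sum _ (fun k _ => hintk k)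
  -- vanishing of the moment integrals
  have hzero : ∀ k : ℕ, k < m → (∫ y : E, c • μ (t⁻¹ • y) *
      ((k.factorial : ℝ)⁻¹ • iteratedFDeriv ℝ k (⇑ν) z (fun _ => -y))) = 0 := by
    intro k hk
    set L : ContinuousMultilinearMap ℝ (fun _ : Fin k => E) ℂ :=
      (iteratedFDeriv ℝ k (⇑ν) z).compContinuousLinearMap
        (fun _ => -(ContinuousLinearMap.id ℝ E)) with hLdef
    have hLapp : ∀ v : E, iteratedFDeriv ℝ k (⇑ν) z (fun _ => -v) = L (fun _ => v) := by
      intro v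
      rw [hLdef, ContinuousMultilinearMap.compContinuousLinearMap_apply]
      simp
    have hFeq : (fun y : E => c • μ (t⁻¹ • y) *
        ((k.factorial : ℝ)⁻¹ • iteratedFDeriv ℝ k (⇑ν) z (fun _ => -y))) =
        (fun y : E => c • μ (t⁻¹ • y) * ((k.factorial : ℝ)⁻¹ • L (fun _ => y))) := by
      funext y; rw [hLapp]
    rw [hFeq]
    set F : E → ℂ := fun y => c • μ (t⁻¹ • y) * ((k.factorial : ℝ)⁻¹ • L (fun _ => y)) with hFdef
    have hcv := MeasureTheory.Measure.integral_comp_smul_of_nonneg (μ := volume) F t (hR := ht.le)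
    have hfr : Module.finrank ℝ E = n := finrank_euclideanSpace_fin
    rw [hfr] at hcv
    have hFscale : ∀ x : E, F (t • x) =
        ((c * ((k.factorial : ℝ)⁻¹ * t ^ k)) • (μ x * L (fun _ => x)) : ℂ) := by
      intro x
      show c • μ (t⁻¹ • (t • x)) * ((k.factorial : ℝ)⁻¹ • L (fun _ => t • x)) = _
      have h1 : t⁻¹ • (t • x) = x := inv_smul_smul₀ ht.ne' x
      have h2 : L (fun _ => t • x) = (t ^ k : ℝ) • L (fun _ => x) := by
        have := L.map_smul_univ (fun _ : Fin k => t) (fun _ : Fin k => x)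
        simpa using this
      rw [h1, h2]
      simp only [Complex.real_smul]
      push_cast
      ring
    have hmain : (∫ x : E, F (t • x)) = 0 := by
      rw [show (fun x : E => F (t • x)) = fun x : E =>
          ((c * ((k.factorial : ℝ)⁻¹ * t ^ k)) • (μ x * L (fun _ => x)) : ℂ) from funext hFscale]
      rw [integral_smul]
      rw [aux_moment n μ k (hmomk k hk) L]
      simp
    rw [hmain] at hcv
    -- hcv : 0 = (t ^ n)⁻¹ • ∫ F, hence ∫ F = 0
    have := hcv.symm
    rwa [smul_eq_zero_iff_right (by positivity : ((t:ℝ) ^ n)⁻¹ ≠ 0)] at this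
  -- split off the Taylor polynomial
  have hsplit : (∫ y : E, c • μ (t⁻¹ • y) * ν (z - y)) =
      ∫ y : E, c • μ (t⁻¹ • y) * (ν (z - y) - T z y) := by
    have e : (fun y : E => c • μ (t⁻¹ • y) * (ν (z - y) - T z y)) =
        fun y : E => c • μ (t⁻¹ • y) * ν (z - y) - c • μ (t⁻¹ • y) * T z y :=
      funext fun y => mul_sub _ _ _
    rw [e, integral_sub hint1 hintT]
    have hT0 : (∫ y : E, c • μ (t⁻¹ • y) * T z y) = 0 := by
      have e2 : (fun y : E => c • μ (t⁻¹ • y) * T z y) = fun y : E => ∑ k ∈ Finset.range m,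
          c • μ (t⁻¹ • y) * ((k.factorial : ℝ)⁻¹ • iteratedFDeriv ℝ k (⇑ν) z (fun _ => -y)) :=
        funext fun y => Finset.mul_sum _ _ _
      rw [e2, integral_finset_sum _ (fun k _ => hintk k)]
      exact Finset.sum_eq_zero fun k hk => hzero k (Finset.mem_range.1 hk)
    rw [hT0, sub_zero]
  have hz0 : (0:ℝ) ≤ (1 + ‖z‖) ^ N := (Real.rpow_pos_of_pos (by positivity) N).le
  have hptwise : ∀ y : E, ‖c • μ (t⁻¹ • y) * (ν (z - y) - T z y)‖ * (1 + ‖z‖) ^ N ≤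
      (c * A) * (‖μ (t⁻¹ • y)‖ * (‖y‖ ^ m * (1 + ‖y‖) ^ K)) := by
    intro y
    simp only [hTdef]
    rw [norm_mul, norm_smul, Real.norm_eq_abs, abs_of_nonneg hcpos.le]
    calc c * ‖μ (t⁻¹ • y)‖ * ‖ν (z - y) - ∑ k ∈ Finset.range m, ((k.factorial : ℝ)⁻¹ •
            iteratedFDeriv ℝ k (⇑ν) z (fun _ => -y))‖ * (1 + ‖z‖) ^ N
        = (c * ‖μ (t⁻¹ • y)‖) * (‖ν (z - y) - ∑ k ∈ Finset.range m, ((k.factorial : ℝ)⁻¹ •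
            iteratedFDeriv ℝ k (⇑ν) z (fun _ => -y))‖ * (1 + ‖z‖) ^ N) := by ring
      _ ≤ (c * ‖μ (t⁻¹ • y)‖) * (A * (‖y‖ ^ m * (1 + ‖y‖) ^ K)) :=
          mul_le_mul_of_nonneg_left (hA z y) (by positivity)
      _ = (c * A) * (‖μ (t⁻¹ • y)‖ * (‖y‖ ^ m * (1 + ‖y‖) ^ K)) := by ring
  have hintRHS : Integrable (fun y : E =>
      (c * A) * (‖μ (t⁻¹ • y)‖ * (‖y‖ ^ m * (1 + ‖y‖) ^ K))) := by
    apply Integrable.const_mul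
    refine (((hμcomp m).add (hμcomp (m + K))).const_mul (3 ^ K)).mono' ?_ ?_
    · exact ((μ.continuous.comp (continuous_const_smul t⁻¹)).norm.mul
        ((continuous_norm.pow m).mul
          ((continuous_const.add continuous_norm).pow K))).aestronglyMeasurable
    · filter_upwards with y
      rw [Real.norm_eq_abs, abs_of_nonneg (by positivity)]
      have h1 : (1 + ‖y‖) ^ K ≤ 3 ^ K * (1 + ‖y‖ ^ K) := by
        refine le_trans (pow_le_pow_left₀ (by positivity)
          (by linarith [norm_nonneg y] : (1:ℝ) + ‖y‖ ≤ 1 + 2*‖y‖) K) (hpoly ‖y‖ (norm_nonneg y))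
      calc ‖μ (t⁻¹ • y)‖ * (‖y‖ ^ m * (1 + ‖y‖) ^ K)
          ≤ ‖μ (t⁻¹ • y)‖ * (‖y‖ ^ m * (3 ^ K * (1 + ‖y‖ ^ K))) := by
            apply mul_le_mul_of_nonneg_left ?_ (norm_nonneg _)
            exact mul_le_mul_of_nonneg_left h1 (by positivity)
        _ = 3 ^ K * (‖y‖ ^ m * ‖μ (t⁻¹ • y)‖ + ‖y‖ ^ (m + K) * ‖μ (t⁻¹ • y)‖) := by
            rw [pow_add]; ring
  set G : E → ℝ := fun y => ‖μ (t⁻¹ • y)‖ * (‖y‖ ^ m * (1 + ‖y‖) ^ K) with hGdef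
  have hGcv : (∫ y : E, G y) =
      (t ^ n) * ∫ x : E, ‖μ x‖ * ((t * ‖x‖) ^ m * (1 + t * ‖x‖) ^ K) := by
    have hcv := MeasureTheory.Measure.integral_comp_smul_of_nonneg (μ := volume) G t (hR := ht.le)
    rw [finrank_euclideanSpace_fin] at hcv
    have hGs : ∀ x : E, G (t • x) = ‖μ x‖ * ((t * ‖x‖) ^ m * (1 + t * ‖x‖) ^ K) := by
      intro x
      simp only [hGdef]
      rw [inv_smul_smul₀ ht.ne', norm_smul, Real.norm_eq_abs, abs_of_nonneg ht.le]
    rw [show (fun x : E => G (t • x)) =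
      fun x : E => ‖μ x‖ * ((t * ‖x‖) ^ m * (1 + t * ‖x‖) ^ K) from funext hGs] at hcv
    rw [hcv, smul_eq_mul]
    field_simp
  have hGle : (∫ x : E, ‖μ x‖ * ((t * ‖x‖) ^ m * (1 + t * ‖x‖) ^ K)) ≤ t ^ m * B := by
    have e : (fun x : E => ‖μ x‖ * ((t * ‖x‖) ^ m * (1 + t * ‖x‖) ^ K)) =
        fun x : E => t ^ m * (‖μ x‖ * (‖x‖ ^ m * (1 + t * ‖x‖) ^ K)) := by
      funext x; rw [mul_pow]; ring
    rw [e, integral_const_mul]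
    apply mul_le_mul_of_nonneg_left ?_ (by positivity)
    apply integral_mono_of_nonneg (Eventually.of_forall fun x => by positivity) hBint
    filter_upwards with x
    apply mul_le_mul_of_nonneg_left ?_ (norm_nonneg _)
    apply mul_le_mul_of_nonneg_left ?_ (by positivity)
    apply pow_le_pow_left₀ (by positivity)
    have : t * ‖x‖ ≤ 2 * ‖x‖ := mul_le_mul_of_nonneg_right ht2 (norm_nonneg _)
    linarith
  rw [hsplit]
  calc ‖∫ y : E, c • μ (t⁻¹ • y) * (ν (z - y) - T z y)‖ * (1 + ‖z‖) ^ N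
      ≤ (∫ y : E, ‖c • μ (t⁻¹ • y) * (ν (z - y) - T z y)‖) * (1 + ‖z‖) ^ N :=
        mul_le_mul_of_nonneg_right (norm_integral_le_integral_norm _) hz0
    _ = ∫ y : E, ‖c • μ (t⁻¹ • y) * (ν (z - y) - T z y)‖ * (1 + ‖z‖) ^ N :=
        (integral_mul_const _ _).symm
    _ ≤ ∫ y : E, (c * A) * (‖μ (t⁻¹ • y)‖ * (‖y‖ ^ m * (1 + ‖y‖) ^ K)) := by
        apply integral_mono_of_nonneg (Eventually.of_forall fun y => by positivity) hintRHS
        exact Eventually.of_forall hptwise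
    _ = (c * A) * ∫ y : E, G y := integral_const_mul _ _
    _ = (c * A) * ((t ^ n) * ∫ x : E, ‖μ x‖ * ((t * ‖x‖) ^ m * (1 + t * ‖x‖) ^ K)) := by
        rw [hGcv]
    _ ≤ (c * A) * ((t ^ n) * (t ^ m * B)) := by
        apply mul_le_mul_of_nonneg_left ?_ (mul_nonneg hcpos.le hA0)
        exact mul_le_mul_of_nonneg_left hGle htn.le
    _ = A * B * t ^ m := by rw [hc]; field_simp
    _ = A * B * t ^ ((M:ℝ) + 1) := by
        have hcast : ((m:ℕ):ℝ) = (M:ℝ) + 1 := by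
          exact_mod_cast congrArg (Int.cast : ℤ → ℝ) hm
        rw [← hcast, Real.rpow_natCast]
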